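/- (Boundedness from bilinear domination) Let E be a symmetric Banach function space with E ∈ Int(L_p, L_q), 1 < p ≤ q < 2, over a finite von Neumann algebra (M, τ). Let z ∈ E^×(M), and let α ∈ (E^×)^{(1/(1−θ))}(M), β ∈ (E^×)^{(1/θ))}(M) be positive with support projections q_α, q_β. If |τ(z* v w)| ≤ ‖α v‖_2 ‖w β‖_2 for all v ∈ E_{1−θ}(M), w ∈ E_θ(M), then z = α y β for some y ∈ M with ‖y‖_∞ ≤ 1; in particular z* = q_β z* q_α. -/

import Mathlib

open MeasureTheory Set ENNReal

noncomputable section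

/-- Lebesgue measure restricted to the interval `(0,1]`. -/
def μ0 : Measure ℝ := volume.restrict (Set.Ioc (0:ℝ) 1)

/-- A (not necessarily complete) description of a Banach function space on `(0,1]`:
a membership predicate together with a norm. -/
structure BFS where
  Mem : (ℝ → ℝ) → Prop
  norm : (ℝ → ℝ) → ℝ

/-- Decreasing rearrangement of `|f|` on `(0,1]`. -/
def rearr (f : ℝ → ℝ) (t : ℝ) : ℝ :=
  sInf {s : ℝ | 0 ≤ s ∧ μ0 {x | s < |f x|} ≤ ENNReal.ofReal t}

/-- `E` is a symmetric (rearrangement invariant) function space. -/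
def BFS.Symmetric (E : BFS) : Prop :=
  ∀ f g : ℝ → ℝ, Measurable f → E.Mem g →
    (∀ t, rearr f t ≤ rearr g t) → E.Mem f ∧ E.norm f ≤ E.norm g

/-- The `r`-convexification `E^{(r)}` of `E`. -/
def BFS.convexify (E : BFS) (r : ℝ) : BFS where
  Mem f := E.Mem fun x => |f x| ^ r
  norm f := (E.norm fun x => |f x| ^ r) ^ (1 / r)

/-- The `r`-convexification with an extended-real exponent, interpreting `r = ∞` as `L_∞`. -/
def BFS.convexifyE (E : BFS) (r : ℝ≥0∞) : BFS :=
  if r = ∞ then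
    { Mem := fun f => ∃ c : ℝ, ∀ x ∈ Set.Ioc (0:ℝ) 1, |f x| ≤ c
      norm := fun f => sInf {c : ℝ | 0 ≤ c ∧ ∀ x ∈ Set.Ioc (0:ℝ) 1, |f x| ≤ c} }
  else E.convexify r.toReal

/-- The Köthe dual `E^×`. -/
def KotheDual (E : BFS) : BFS where
  Mem f := ∀ g, E.Mem g → Integrable (fun x => |f x * g x|) μ0
  norm f := sSup {c : ℝ | ∃ g, E.Mem g ∧ E.norm g ≤ 1 ∧ c = ∫ x, |f x * g x| ∂μ0}

/-- `L_r(0,1]` as a Banach function space. -/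
def LpBFS (r : ℝ≥0∞) : BFS where
  Mem f := MemLp f r μ0
  norm f := (eLpNorm f r μ0).toReal

/-- `E` is an interpolation space for the couple `(L_p, L_q)`:
`L_p ∩ L_q ⊆ E ⊆ L_p + L_q` and every operator bounded on both `L_p` and `L_q`
is bounded on `E`, with uniform constant. -/
def IsInterpolation (E : BFS) (p q : ℝ≥0∞) : Prop :=
  (∀ f, MemLp f p μ0 → MemLp f q μ0 → E.Mem f) ∧
  (∀ f, E.Mem f → ∃ g h, (∀ x, f x = g x + h x) ∧ MemLp g p μ0 ∧ MemLp h q μ0) ∧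
  ∃ C : ℝ, 0 < C ∧ ∀ (T : (ℝ → ℝ) →ₗ[ℝ] (ℝ → ℝ)) (Mp Mq : ℝ),
    (∀ f, MemLp f p μ0 →
      MemLp (T f) p μ0 ∧ eLpNorm (T f) p μ0 ≤ ENNReal.ofReal Mp * eLpNorm f p μ0) →
    (∀ f, MemLp f q μ0 →
      MemLp (T f) q μ0 ∧ eLpNorm (T f) q μ0 ≤ ENNReal.ofReal Mq * eLpNorm f q μ0) →
    ∀ f, E.Mem f → E.Mem (T f) ∧ E.norm (T f) ≤ C * max Mp Mq * E.norm f

/-- Pointwise product space `X ⊙ Y`. -/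
def prodSpace (X Y : BFS) : BFS where
  Mem h := ∃ f g, X.Mem f ∧ Y.Mem g ∧ ∀ x, h x = f x * g x
  norm h := sInf {c : ℝ |
    ∃ f g, X.Mem f ∧ Y.Mem g ∧ (∀ x, h x = f x * g x) ∧ c = X.norm f * Y.norm g}

/-- Equality of Banach function spaces (same elements, same norms). -/
def BFSEq (A B : BFS) : Prop := (∀ f, A.Mem f ↔ B.Mem f) ∧ ∀ f, A.norm f = B.norm f

end

noncomputable section

open Matrix
open scoped ComplexOrder

/-- Normalized trace on `n × n` complex matrices. -/
def nTr {n : ℕ} (A : Matrix (Fin n) (Fin n) ℂ) : ℂ := Matrix.trace A / n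

/-- The `L_2` norm with respect to the normalized trace. -/
def nL2 {n : ℕ} (A : Matrix (Fin n) (Fin n) ℂ) : ℝ := Real.sqrt ((nTr (Aᴴ * A)).re)

/-- `q` is the support projection of the positive matrix `α`. -/
def IsSupportProj {n : ℕ} (α q : Matrix (Fin n) (Fin n) ℂ) : Prop :=
  qᴴ = q ∧ q * q = q ∧ q * α = α ∧ ∀ x : Matrix (Fin n) (Fin n) ℂ, α * x = 0 → q * x = 0

namespace BDAux
open Matrix Complex
open scoped ComplexOrder

variable {n : ℕ}

/-- rank one matrix `u vᴴ` -/
def R (u v : Fin n → ℂ) : Matrix (Fin n) (Fin n) ℂ := vecMulVec u (star v)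

def cnorm (u : Fin n → ℂ) : ℝ := Real.sqrt (∑ i, Complex.normSq (u i))

lemma cnorm_nonneg (u : Fin n → ℂ) : 0 ≤ cnorm u := Real.sqrt_nonneg _

lemma dot_star_self (u : Fin n → ℂ) :
    dotProduct (star u) u = ((∑ i, Complex.normSq (u i) : ℝ) : ℂ) := by
  push_cast
  simp only [dotProduct, Pi.star_apply, RCLike.star_def]
  congr 1; ext i
  rw [mul_comm, Complex.mul_conj]

lemma cnorm_sq (u : Fin n → ℂ) : cnorm u ^ 2 = ∑ i, Complex.normSq (u i) := by
  rw [cnorm, Real.sq_sqrt]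
  exact Finset.sum_nonneg fun i _ => Complex.normSq_nonneg _

lemma trace_mul_R (X : Matrix (Fin n) (Fin n) ℂ) (u v : Fin n → ℂ) :
    trace (X * R u v) = dotProduct (star v) (X *ᵥ u) := by
  simp only [trace, diag, mul_apply, R, vecMulVec_apply, dotProduct, mulVec,
    Pi.star_apply, Finset.mul_sum]
  apply Finset.sum_congr rfl; intro i _
  apply Finset.sum_congr rfl; intro j _
  ring

lemma R_mul_R (u v : Fin n → ℂ) (e : Fin n → ℂ) (he : dotProduct (star e) e = 1) :
    R u e * R e v = R u v := by
  ext i j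
  simp only [mul_apply, R, vecMulVec_apply, Pi.star_apply]
  have h1 : ∑ k, u i * star (e k) * (e k * star (v j))
      = (∑ k, star (e k) * e k) * (u i * star (v j)) := by
    rw [Finset.sum_mul]
    apply Finset.sum_congr rfl; intro k _; ring
  have h2 : (∑ k, star (e k) * e k) = 1 := by
    simpa [dotProduct] using he
  rw [h1, h2, one_mul]

lemma trace_R_conjTranspose_mul_self (u v : Fin n → ℂ) :
    trace ((R u v)ᴴ * (R u v)) = dotProduct (star u) u * dotProduct (star v) v := by
  simp only [trace, diag, mul_apply, R, vecMulVec_apply, conjTranspose_apply,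
    Pi.star_apply, dotProduct, star_mul', star_star]
  rw [Finset.sum_mul_sum, Finset.sum_comm]
  apply Finset.sum_congr rfl; intro i _
  apply Finset.sum_congr rfl; intro j _
  ring

lemma trace_sq_re_nonneg (A : Matrix (Fin n) (Fin n) ℂ) :
    0 ≤ (trace (Aᴴ * A)).re := by
  have h : trace (Aᴴ * A) = ((∑ j, ∑ i, Complex.normSq (A i j) : ℝ) : ℂ) := by
    push_cast
    simp only [trace, diag, mul_apply, conjTranspose_apply, RCLike.star_def]
    apply Finset.sum_congr rfl; intro j _
    apply Finset.sum_congr rfl; intro i _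
    rw [mul_comm, Complex.mul_conj]
  rw [h, Complex.ofReal_re]
  exact Finset.sum_nonneg fun j _ => Finset.sum_nonneg fun i _ => Complex.normSq_nonneg _

lemma nTr_re (A : Matrix (Fin n) (Fin n) ℂ) : (nTr A).re = (trace A).re / n := by
  simp [nTr]

lemma nL2_mono {A B : Matrix (Fin n) (Fin n) ℂ}
    (h : (trace (Aᴴ * A)).re ≤ (trace (Bᴴ * B)).re) : nL2 A ≤ nL2 B := by
  unfold nL2
  apply Real.sqrt_le_sqrt
  rw [nTr_re, nTr_re]
  rcases Nat.eq_zero_or_pos n with h0 | h0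
  · simp [h0]
  · have hpos : (0:ℝ) < n := by exact_mod_cast h0
    exact div_le_div_of_nonneg_right h hpos.le

lemma nL2_conjTranspose (A : Matrix (Fin n) (Fin n) ℂ) : nL2 Aᴴ = nL2 A := by
  unfold nL2 nTr
  rw [conjTranspose_conjTranspose, trace_mul_comm]

lemma nL2_zero : nL2 (0 : Matrix (Fin n) (Fin n) ℂ) = 0 := by
  simp [nL2, nTr]

lemma nL2_proj_left {P : Matrix (Fin n) (Fin n) ℂ} (hP1 : Pᴴ = P) (hP2 : P * P = P)
    (A : Matrix (Fin n) (Fin n) ℂ) : nL2 (P * A) ≤ nL2 A := by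
  apply nL2_mono
  have key : trace (Aᴴ * A)
      = trace ((P * A)ᴴ * (P * A)) + trace (((1 - P) * A)ᴴ * ((1 - P) * A)) := by
    have e1 : (P * A)ᴴ * (P * A) = Aᴴ * P * A := by
      rw [conjTranspose_mul, hP1, mul_assoc, ← mul_assoc P, hP2, ← mul_assoc]
    have hQ1 : (1 - P)ᴴ = 1 - P := by
      rw [conjTranspose_sub, conjTranspose_one, hP1]
    have hQ2 : (1 - P) * (1 - P) = 1 - P := by
      simp [sub_mul, mul_sub, hP2]
    have e2 : ((1 - P) * A)ᴴ * ((1 - P) * A) = Aᴴ * (1 - P) * A := by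
      rw [conjTranspose_mul, hQ1, mul_assoc, ← mul_assoc (1 - P), hQ2, ← mul_assoc]
    rw [e1, e2, ← trace_add]
    congr 1
    rw [mul_sub, sub_mul, mul_one]
    abel
  have h2 := trace_sq_re_nonneg ((1 - P) * A)
  have := congrArg Complex.re key
  rw [Complex.add_re] at this
  linarith

lemma nL2_proj_right {P : Matrix (Fin n) (Fin n) ℂ} (hP1 : Pᴴ = P) (hP2 : P * P = P)
    (A : Matrix (Fin n) (Fin n) ℂ) : nL2 (A * P) ≤ nL2 A := by
  have e : A * P = (P * Aᴴ)ᴴ := by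
    rw [conjTranspose_mul, hP1, conjTranspose_conjTranspose]
  rw [e, nL2_conjTranspose]
  calc nL2 (P * Aᴴ) ≤ nL2 Aᴴ := nL2_proj_left hP1 hP2 Aᴴ
  _ = nL2 A := nL2_conjTranspose A

lemma dot_conjTranspose (y : Matrix (Fin n) (Fin n) ℂ) (v w : Fin n → ℂ) :
    dotProduct (star v) (yᴴ *ᵥ w) = dotProduct (star (y *ᵥ v)) w := by
  simp only [dotProduct, mulVec, conjTranspose_apply, Pi.star_apply, dotProduct,
    Finset.mul_sum, star_sum, star_mul', star_star, Finset.sum_mul]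
  rw [Finset.sum_comm]
  apply Finset.sum_congr rfl; intro i _
  apply Finset.sum_congr rfl; intro j _
  ring

/-- matrices with all `nTr (X * a) = 0` vanish -/
lemma eq_zero_of_nTr (hn : 0 < n) (X : Matrix (Fin n) (Fin n) ℂ)
    (h : ∀ a, nTr (X * a) = 0) : X = 0 := by
  ext i j
  have := h (R (Pi.single j 1) (Pi.single i 1))
  unfold nTr at this
  have hne : (n : ℂ) ≠ 0 := Nat.cast_ne_zero.mpr hn.ne'
  have h1 : trace (X * R (Pi.single j 1) (Pi.single i 1)) = 0 :=
    (div_eq_zero_iff.mp this).resolve_right hne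
  rw [trace_mul_R] at h1
  simp only [Matrix.zero_apply]
  simpa [dotProduct, mulVec, Pi.single_apply] using h1

/-- pseudoinverse of a Hermitian matrix -/
def pinv (A : Matrix (Fin n) (Fin n) ℂ) (hA : A.IsHermitian) : Matrix (Fin n) (Fin n) ℂ :=
  (hA.eigenvectorUnitary : Matrix (Fin n) (Fin n) ℂ)
    * Matrix.diagonal (RCLike.ofReal ∘ fun i => (hA.eigenvalues i)⁻¹)
    * star (hA.eigenvectorUnitary : Matrix (Fin n) (Fin n) ℂ)

lemma sandwich_mul (U : Matrix.unitaryGroup (Fin n) ℂ) (f g : Fin n → ℂ) :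
    ((U : Matrix (Fin n) (Fin n) ℂ) * diagonal f * star (U : Matrix (Fin n) (Fin n) ℂ))
      * ((U : Matrix (Fin n) (Fin n) ℂ) * diagonal g * star (U : Matrix (Fin n) (Fin n) ℂ))
    = (U : Matrix (Fin n) (Fin n) ℂ) * diagonal (fun i => f i * g i)
        * star (U : Matrix (Fin n) (Fin n) ℂ) := by
  have hU : star (U : Matrix (Fin n) (Fin n) ℂ) * (U : Matrix (Fin n) (Fin n) ℂ) = 1 :=
    (Matrix.mem_unitaryGroup_iff').mp U.2
  have : ((U : Matrix (Fin n) (Fin n) ℂ) * diagonal f * star (U : Matrix (Fin n) (Fin n) ℂ))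
      * ((U : Matrix (Fin n) (Fin n) ℂ) * diagonal g * star (U : Matrix (Fin n) (Fin n) ℂ))
      = (U : Matrix (Fin n) (Fin n) ℂ) * (diagonal f
        * ((star (U : Matrix (Fin n) (Fin n) ℂ) * (U : Matrix (Fin n) (Fin n) ℂ))
        * diagonal g)) * star (U : Matrix (Fin n) (Fin n) ℂ) := by
    simp only [Matrix.mul_assoc]
  rw [this, hU, one_mul, diagonal_mul_diagonal]

lemma sandwich_congr (U : Matrix.unitaryGroup (Fin n) ℂ) {f g : Fin n → ℂ}
    (h : ∀ i, f i = g i) :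
    (U : Matrix (Fin n) (Fin n) ℂ) * diagonal f * star (U : Matrix (Fin n) (Fin n) ℂ)
      = (U : Matrix (Fin n) (Fin n) ℂ) * diagonal g
        * star (U : Matrix (Fin n) (Fin n) ℂ) := by
  rw [show f = g from funext h]

lemma pinv_conjTranspose (A : Matrix (Fin n) (Fin n) ℂ) (hA : A.IsHermitian) :
    (pinv A hA)ᴴ = pinv A hA := by
  unfold pinv
  have hfun : star (RCLike.ofReal ∘ fun i => (hA.eigenvalues i)⁻¹)
      = (RCLike.ofReal ∘ fun i => ((hA.eigenvalues i)⁻¹ : ℝ) : Fin n → ℂ) := by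
    funext i
    simp [Function.comp, Pi.star_apply, RCLike.star_def, RCLike.conj_ofReal]
  have hD : (diagonal (RCLike.ofReal ∘ fun i => (hA.eigenvalues i)⁻¹)
        : Matrix (Fin n) (Fin n) ℂ)ᴴ
      = Matrix.diagonal (RCLike.ofReal ∘ fun i => (hA.eigenvalues i)⁻¹) := by
    rw [diagonal_conjTranspose, hfun]
  simp only [star_eq_conjTranspose, conjTranspose_mul, conjTranspose_conjTranspose, hD,
    Matrix.mul_assoc]

lemma mul_pinv_eq (A : Matrix (Fin n) (Fin n) ℂ) (hA : A.IsHermitian) :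
    A * pinv A hA
      = (hA.eigenvectorUnitary : Matrix (Fin n) (Fin n) ℂ)
        * diagonal (fun i => if hA.eigenvalues i = 0 then 0 else (1 : ℂ))
        * star (hA.eigenvectorUnitary : Matrix (Fin n) (Fin n) ℂ) := by
  have h0 : A * pinv A hA
      = ((hA.eigenvectorUnitary : Matrix (Fin n) (Fin n) ℂ)
          * Matrix.diagonal (RCLike.ofReal ∘ hA.eigenvalues)
          * star (hA.eigenvectorUnitary : Matrix (Fin n) (Fin n) ℂ)) * pinv A hA := by
    congr 1
    exact hA.spectral_theorem
  rw [h0]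
  unfold pinv
  rw [sandwich_mul]
  apply sandwich_congr
  intro i
  simp only [Function.comp_apply]
  by_cases h : hA.eigenvalues i = 0
  · simp [h]
  · rw [if_neg h, ← RCLike.ofReal_mul, mul_inv_cancel₀ h, RCLike.ofReal_one]

lemma pinv_mul_eq (A : Matrix (Fin n) (Fin n) ℂ) (hA : A.IsHermitian) :
    pinv A hA * A = A * pinv A hA := by
  have h0 : pinv A hA * A
      = pinv A hA * ((hA.eigenvectorUnitary : Matrix (Fin n) (Fin n) ℂ)
          * Matrix.diagonal (RCLike.ofReal ∘ hA.eigenvalues)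
          * star (hA.eigenvectorUnitary : Matrix (Fin n) (Fin n) ℂ)) := by
    congr 1
    exact hA.spectral_theorem
  rw [h0, mul_pinv_eq]
  unfold pinv
  rw [sandwich_mul]
  apply sandwich_congr
  intro i
  simp only [Function.comp_apply]
  by_cases h : hA.eigenvalues i = 0
  · simp [h]
  · rw [if_neg h, ← RCLike.ofReal_mul, inv_mul_cancel₀ h, RCLike.ofReal_one]

lemma supp_conjTranspose (A : Matrix (Fin n) (Fin n) ℂ) (hA : A.IsHermitian) :
    (A * pinv A hA)ᴴ = A * pinv A hA := by
  rw [mul_pinv_eq]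
  have hfun : star (fun i => if hA.eigenvalues i = 0 then 0 else (1 : ℂ))
      = fun i => if hA.eigenvalues i = 0 then 0 else (1 : ℂ) := by
    funext i
    by_cases h : hA.eigenvalues i = 0 <;> simp [h, Pi.star_apply]
  have hD : (diagonal (fun i => if hA.eigenvalues i = 0 then 0 else (1 : ℂ))
        : Matrix (Fin n) (Fin n) ℂ)ᴴ
      = diagonal (fun i => if hA.eigenvalues i = 0 then 0 else (1 : ℂ)) := by
    rw [diagonal_conjTranspose, hfun]
  simp only [star_eq_conjTranspose, conjTranspose_mul, conjTranspose_conjTranspose, hD,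
    Matrix.mul_assoc]

lemma supp_idem (A : Matrix (Fin n) (Fin n) ℂ) (hA : A.IsHermitian) :
    (A * pinv A hA) * (A * pinv A hA) = A * pinv A hA := by
  rw [mul_pinv_eq, sandwich_mul]
  apply sandwich_congr
  intro i
  by_cases h : hA.eigenvalues i = 0 <;> simp [h]

lemma supp_mul_self (A : Matrix (Fin n) (Fin n) ℂ) (hA : A.IsHermitian) :
    (A * pinv A hA) * A = A := by
  have h0 : (A * pinv A hA) * A
      = (A * pinv A hA) * ((hA.eigenvectorUnitary : Matrix (Fin n) (Fin n) ℂ)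
          * Matrix.diagonal (RCLike.ofReal ∘ hA.eigenvalues)
          * star (hA.eigenvectorUnitary : Matrix (Fin n) (Fin n) ℂ)) := by
    congr 1
    exact hA.spectral_theorem
  rw [h0, mul_pinv_eq, sandwich_mul]
  conv_rhs => rw [hA.spectral_theorem]
  apply sandwich_congr
  intro i
  simp only [Function.comp_apply]
  by_cases h : hA.eigenvalues i = 0 <;> simp [h]

lemma supportProj_eq {A q : Matrix (Fin n) (Fin n) ℂ} (hA : A.IsHermitian)
    (hq : IsSupportProj A q) : q = A * pinv A hA := by
  obtain ⟨hq1, hq2, hq3, hq4⟩ := hq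
  set P := A * pinv A hA with hP
  have hAP : A * P = A := by
    have h1 : (P * A)ᴴ = A * P := by
      rw [conjTranspose_mul, supp_conjTranspose A hA, hA.eq]
    have h2 : P * A = A := supp_mul_self A hA
    rw [← h1, h2, hA.eq]
  have h1 : A * (1 - P) = 0 := by
    rw [Matrix.mul_sub, Matrix.mul_one, hAP, sub_self]
  have h2 : q * (1 - P) = 0 := hq4 _ h1
  have h3 : q = q * P := by
    have h4 : q - q * P = 0 := by
      rw [← Matrix.mul_one q, Matrix.mul_assoc, one_mul, ← Matrix.mul_sub]
      simpa using h2
    exact (sub_eq_zero.mp h4)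
  have h5 : q * P = P := by
    rw [hP, ← Matrix.mul_assoc, hq3]
  rw [h3, h5]

end BDAux
/-- Boundedness from bilinear domination (matrix-algebra model with normalized
trace): let `E` be a symmetric Banach function space with `E ∈ Int(L_p, L_q)`,
`1 < p ≤ q < 2`, and `0 ≤ θ ≤ 1`. Let `z` and positive `α`, `β` with support
projections `q_α`, `q_β` be given. If `|τ(z^* v w)| ≤ ‖α v‖_2 ‖w β‖_2` for all
`v`, `w`, then `z = α y β` for some contraction `y` (i.e. `y^*y ≤ 1`); in
particular `z^* = q_β z^* q_α`. -/
theorem bounded_from_bilinear_domination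
    (E : BFS) (hE : E.Symmetric)
    (p q : ℝ) (hp : 1 < p) (hpq : p ≤ q) (hq : q < 2)
    (hInt : IsInterpolation E (ENNReal.ofReal p) (ENNReal.ofReal q))
    (θ : ℝ) (hθ0 : 0 ≤ θ) (hθ1 : θ ≤ 1)
    (n : ℕ) (hn : 0 < n)
    (z α β qα qβ : Matrix (Fin n) (Fin n) ℂ)
    (hα : α.PosSemidef) (hβ : β.PosSemidef)
    (hqα : IsSupportProj α qα) (hqβ : IsSupportProj β qβ)
    (hdom : ∀ v w : Matrix (Fin n) (Fin n) ℂ,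
      ‖nTr (zᴴ * (v * w))‖ ≤ nL2 (α * v) * nL2 (w * β)) :
    (∃ y : Matrix (Fin n) (Fin n) ℂ, (1 - yᴴ * y).PosSemidef ∧ z = α * y * β) ∧
    zᴴ = qβ * zᴴ * qα := by
  classical
  open Matrix BDAux in
  -- basic facts about α, β, qα, qβ
  have hαH : αᴴ = α := hα.1
  have hβH : βᴴ = β := hβ.1
  have hαqα : α * qα = α := by
    have h1 : (qα * α)ᴴ = α * qα := by rw [conjTranspose_mul, hαH, hqα.1]
    rw [← h1, hqα.2.2.1, hαH]
  have hqββ : qβ * β = β := hqβ.2.2.1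
  -- Step 1: support of z
  have hzα : zᴴ * qα = zᴴ := by
    have hX : zᴴ * (1 - qα) = 0 := by
      apply BDAux.eq_zero_of_nTr hn
      intro a
      have hd := hdom ((1 - qα) * a) 1
      have hαv : α * ((1 - qα) * a) = 0 := by
        rw [← Matrix.mul_assoc, Matrix.mul_sub, Matrix.mul_one, hαqα, sub_self,
          Matrix.zero_mul]
      rw [hαv, BDAux.nL2_zero, zero_mul] at hd
      have h0 : nTr (zᴴ * ((1 - qα) * a * 1)) = 0 := by
        have := norm_nonneg (nTr (zᴴ * ((1 - qα) * a * 1)))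
        have habs : ‖nTr (zᴴ * ((1 - qα) * a * 1))‖ = 0 := le_antisymm hd this
        exact norm_eq_zero.mp habs
      calc nTr (zᴴ * (1 - qα) * a) = nTr (zᴴ * ((1 - qα) * a * 1)) := by
            rw [Matrix.mul_one, Matrix.mul_assoc]
      _ = 0 := h0
    have h2 : zᴴ - zᴴ * qα = 0 := by
      rw [← Matrix.mul_one zᴴ, Matrix.mul_assoc, Matrix.one_mul, ← Matrix.mul_sub]
      simpa using hX
    exact (sub_eq_zero.mp h2).symm
  have hzβ : qβ * zᴴ = zᴴ := by
    have hX : (1 - qβ) * zᴴ = 0 := by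
      apply BDAux.eq_zero_of_nTr hn
      intro a
      have hd := hdom 1 (a * (1 - qβ))
      have hwβ : (a * (1 - qβ)) * β = 0 := by
        rw [Matrix.mul_assoc, Matrix.sub_mul, Matrix.one_mul, hqββ, sub_self,
          Matrix.mul_zero]
      rw [hwβ, BDAux.nL2_zero, mul_zero] at hd
      have h0 : nTr (zᴴ * (1 * (a * (1 - qβ)))) = 0 := by
        have := norm_nonneg (nTr (zᴴ * (1 * (a * (1 - qβ)))))
        have habs : ‖nTr (zᴴ * (1 * (a * (1 - qβ))))‖ = 0 := le_antisymm hd this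
        exact norm_eq_zero.mp habs
      calc nTr ((1 - qβ) * zᴴ * a)
          = nTr (zᴴ * (1 * (a * (1 - qβ)))) := by
            unfold nTr
            congr 1
            rw [Matrix.one_mul, ← Matrix.mul_assoc, Matrix.trace_mul_cycle, Matrix.trace_mul_cycle]
      _ = 0 := h0
    have h2 : zᴴ - qβ * zᴴ = 0 := by
      rw [← Matrix.one_mul zᴴ, ← Matrix.mul_assoc, Matrix.mul_one, ← Matrix.sub_mul]
      simpa using hX
    exact (sub_eq_zero.mp h2).symm
  have hsupp : zᴴ = qβ * zᴴ * qα := by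
    rw [Matrix.mul_assoc, hzα, hzβ]
  have hz : qα * z * qβ = z := by
    have h1 := congrArg conjTranspose hsupp
    rw [conjTranspose_conjTranspose, conjTranspose_mul, conjTranspose_mul,
      conjTranspose_conjTranspose, hqα.1, hqβ.1] at h1
    rw [Matrix.mul_assoc]
    exact h1.symm
  -- Step 2: pseudo-inverses
  set pα := BDAux.pinv α hα.1 with hpαdef
  set pβ := BDAux.pinv β hβ.1 with hpβdef
  have hPα : qα = α * pα := BDAux.supportProj_eq hα.1 hqα
  have hPβ : qβ = β * pβ := BDAux.supportProj_eq hβ.1 hqβ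
  set y := pα * z * pβ with hydef
  have hz_eq : z = α * y * β := by
    have h1 : pβ * β = β * pβ := BDAux.pinv_mul_eq β hβ.1
    have h2 : α * y * β = (α * pα) * z * (pβ * β) := by
      simp only [hydef, Matrix.mul_assoc]
    rw [h2, h1, ← hPα, ← hPβ, hz]
  -- Step 3: the key bilinear bound
  set e : Fin n → ℂ := Pi.single (⟨0, hn⟩ : Fin n) (1 : ℂ) with hedef
  have he : dotProduct (star e) e = 1 := by
    simp [hedef, dotProduct, Pi.single_apply]
  have hce : BDAux.cnorm e = 1 := by
    have h1 : (∑ i, Complex.normSq (e i)) = 1 := by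
      simp [hedef, Pi.single_apply, apply_ite Complex.normSq]
    rw [BDAux.cnorm, h1, Real.sqrt_one]
  have hn' : (0 : ℝ) < n := by exact_mod_cast hn
  have hnL2R : ∀ (a b : Fin n → ℂ),
      nL2 (BDAux.R a b) = BDAux.cnorm a * BDAux.cnorm b / Real.sqrt n := by
    intro a b
    have hX : (0 : ℝ) ≤ ∑ i, Complex.normSq (a i) :=
      Finset.sum_nonneg fun i _ => Complex.normSq_nonneg _
    have hY : (0 : ℝ) ≤ ∑ i, Complex.normSq (b i) :=
      Finset.sum_nonneg fun i _ => Complex.normSq_nonneg _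
    have h1 : (nTr ((BDAux.R a b)ᴴ * BDAux.R a b)).re
        = ((∑ i, Complex.normSq (a i)) * (∑ i, Complex.normSq (b i))) / n := by
      rw [BDAux.nTr_re, BDAux.trace_R_conjTranspose_mul_self, BDAux.dot_star_self,
        BDAux.dot_star_self, ← Complex.ofReal_mul, Complex.ofReal_re]
    show Real.sqrt _ = _
    rw [h1, Real.sqrt_div (mul_nonneg hX hY), Real.sqrt_mul hX]
    rfl
  have key : ∀ u v : Fin n → ℂ,
      ‖dotProduct (star v) (yᴴ *ᵥ u)‖ ≤ BDAux.cnorm u * BDAux.cnorm v := by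
    intro u v
    have hd := hdom (pα * BDAux.R u e) (BDAux.R e v * pβ)
    have hmid : (pα * BDAux.R u e) * (BDAux.R e v * pβ) = pα * (BDAux.R u v * pβ) := by
      have h1 : (pα * BDAux.R u e) * (BDAux.R e v * pβ)
          = pα * ((BDAux.R u e * BDAux.R e v) * pβ) := by
        simp only [Matrix.mul_assoc]
      rw [h1, BDAux.R_mul_R u v e he]
    have hy' : pβ * (zᴴ * pα) = yᴴ := by
      rw [hydef]
      simp only [conjTranspose_mul, BDAux.pinv_conjTranspose, Matrix.mul_assoc, hpαdef, hpβdef]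
    have hLHS : nTr (zᴴ * ((pα * BDAux.R u e) * (BDAux.R e v * pβ)))
        = dotProduct (star v) (yᴴ *ᵥ u) / n := by
      rw [hmid]
      have ht : trace (zᴴ * (pα * (BDAux.R u v * pβ)))
          = trace ((pβ * (zᴴ * pα)) * BDAux.R u v) := by
        have h1 : zᴴ * (pα * (BDAux.R u v * pβ)) = ((zᴴ * pα) * BDAux.R u v) * pβ := by
          simp only [Matrix.mul_assoc]
        have h2 : pβ * ((zᴴ * pα) * BDAux.R u v) = (pβ * (zᴴ * pα)) * BDAux.R u v := by
          simp only [Matrix.mul_assoc]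
        rw [h1, Matrix.trace_mul_comm, h2]
      unfold nTr
      rw [ht, hy', BDAux.trace_mul_R]
    have hsα : ((α * pα)ᴴ = α * pα) := BDAux.supp_conjTranspose α hα.1
    have hsαI : (α * pα) * (α * pα) = α * pα := BDAux.supp_idem α hα.1
    have hsβ : ((β * pβ)ᴴ = β * pβ) := BDAux.supp_conjTranspose β hβ.1
    have hsβI : (β * pβ) * (β * pβ) = β * pβ := BDAux.supp_idem β hβ.1
    have hRb1 : nL2 (α * (pα * BDAux.R u e)) ≤ nL2 (BDAux.R u e) := by
      have h1 : α * (pα * BDAux.R u e) = (α * pα) * BDAux.R u e := by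
        rw [Matrix.mul_assoc]
      rw [h1]
      exact BDAux.nL2_proj_left hsα hsαI _
    have hRb2 : nL2 ((BDAux.R e v * pβ) * β) ≤ nL2 (BDAux.R e v) := by
      have h1 : (BDAux.R e v * pβ) * β = BDAux.R e v * (β * pβ) := by
        rw [Matrix.mul_assoc, BDAux.pinv_mul_eq β hβ.1]
      rw [h1]
      exact BDAux.nL2_proj_right hsβ hsβI _
    have hnL2nonneg : ∀ A : Matrix (Fin n) (Fin n) ℂ, 0 ≤ nL2 A := fun A =>
      Real.sqrt_nonneg _
    have habs : ‖dotProduct (star v) (yᴴ *ᵥ u) / (n : ℂ)‖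
        = ‖dotProduct (star v) (yᴴ *ᵥ u)‖ / n := by
      rw [norm_div, Complex.norm_natCast]
    have hS : Real.sqrt n * Real.sqrt n = (n : ℝ) := Real.mul_self_sqrt hn'.le
    have hSpos : 0 < Real.sqrt n := Real.sqrt_pos.mpr hn'
    have step : ‖dotProduct (star v) (yᴴ *ᵥ u)‖ / n
        ≤ BDAux.cnorm u * BDAux.cnorm v / n := by
      calc ‖dotProduct (star v) (yᴴ *ᵥ u)‖ / n
          = ‖nTr (zᴴ * ((pα * BDAux.R u e) * (BDAux.R e v * pβ)))‖ := by
            rw [hLHS, ← habs]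
      _ ≤ nL2 (α * (pα * BDAux.R u e)) * nL2 ((BDAux.R e v * pβ) * β) := hd
      _ ≤ nL2 (BDAux.R u e) * nL2 (BDAux.R e v) :=
            mul_le_mul hRb1 hRb2 (hnL2nonneg _) (hnL2nonneg _)
      _ = (BDAux.cnorm u * 1 / Real.sqrt n) * (1 * BDAux.cnorm v / Real.sqrt n) := by
            rw [hnL2R, hnL2R, hce]
      _ = BDAux.cnorm u * BDAux.cnorm v / n := by
            rw [mul_one, one_mul, div_mul_div_comm, hS]
    exact (div_le_div_iff_of_pos_right hn').mp step
  -- Step 4: y is a contraction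
  have hyv : ∀ v0 : Fin n → ℂ, BDAux.cnorm (y *ᵥ v0) ≤ BDAux.cnorm v0 := by
    intro v0
    have h1 := key (y *ᵥ v0) v0
    have h2 : dotProduct (star v0) (yᴴ *ᵥ (y *ᵥ v0))
        = dotProduct (star (y *ᵥ v0)) (y *ᵥ v0) := BDAux.dot_conjTranspose y v0 (y *ᵥ v0)
    rw [h2, BDAux.dot_star_self] at h1
    have h3 : (0 : ℝ) ≤ ∑ i, Complex.normSq ((y *ᵥ v0) i) :=
      Finset.sum_nonneg fun i _ => Complex.normSq_nonneg _
    rw [Complex.norm_real, Real.norm_eq_abs, abs_of_nonneg h3, ← BDAux.cnorm_sq] at h1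
    have hc0 := BDAux.cnorm_nonneg (y *ᵥ v0)
    have hd0 := BDAux.cnorm_nonneg v0
    nlinarith [sq_nonneg (BDAux.cnorm (y *ᵥ v0) - BDAux.cnorm v0)]
  refine ⟨⟨y, Matrix.PosSemidef.of_dotProduct_mulVec_nonneg ?_ ?_, hz_eq⟩, hsupp⟩
  · show (1 - yᴴ * y)ᴴ = 1 - yᴴ * y
    rw [conjTranspose_sub, conjTranspose_one, conjTranspose_mul,
      conjTranspose_conjTranspose]
  · intro x
    have e1 : (1 - yᴴ * y) *ᵥ x = x - yᴴ *ᵥ (y *ᵥ x) := by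
      rw [Matrix.sub_mulVec, Matrix.one_mulVec, Matrix.mulVec_mulVec]
    rw [e1, dotProduct_sub, BDAux.dot_conjTranspose, BDAux.dot_star_self,
      BDAux.dot_star_self, ← Complex.ofReal_sub]
    rw [Complex.zero_le_real]
    rw [← BDAux.cnorm_sq, ← BDAux.cnorm_sq]
    have := hyv x
    have h1 := BDAux.cnorm_nonneg (y *ᵥ x)
    have h2 := BDAux.cnorm_nonneg x
    nlinarith


end
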